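/- Let F be an F-sequence of length n. For 0 ≤ i ≤ n let κ(i) be the least k ≥ 0 with F^k(i) = 0, and for k ≥ 0 let i_k be the least index i ≤ n with κ(i) = k, when one exists. Then for every k ≥ 1 such that i_k exists, i_{k−1} exists and F(i_k) = i_{k−1}; consequently, whenever i_{k+1} also exists, i_{k+1} − i_k ≥ i_k − i_{k−1}. -/

import Mathlib

/-- The set `Opt F j` of *options* of an index `j` for a function `F : ℕ → ℕ`, defined
by strong recursion on `j` (well-defined for F-sequences since `F j < j` for `j ≥ 1`):
`Opt 0 = {0,1}`; for `j ≥ 1` with `F j = 0`, `Opt j = {j+1} ∪ ({0,1} \ {F (j+1)})`;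
for `j ≥ 1` with `F j ≠ 0` and `F (j+1) ≠ F j + 1`, `Opt j = {j+1} ∪ Opt (F j)`;
for `j ≥ 1` with `F j ≠ 0` and `F (j+1) = F j + 1`,
`Opt j = {j+1} ∪ (Opt (F j) \ {F j + 1})`.
(The value when `j ≥ 1` but `F j ≥ j` is junk, never attained for F-sequences.) -/
def Opt (F : ℕ → ℕ) (j : ℕ) : Finset ℕ :=
  if j = 0 then {0, 1}
  else if F j = 0 then insert (j + 1) ({0, 1} \ {F (j + 1)})
  else if h : F j < j then
    if F (j + 1) = F j + 1 then insert (j + 1) (Opt F (F j) \ {F j + 1})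
    else insert (j + 1) (Opt F (F j))
  else ∅
termination_by j
decreasing_by all_goals exact h

/-- `F` is an *F-sequence of length `n`*: a function from `{0,…,n}` (encoded as a total
function on `ℕ`, only its values on `{0,…,n}` being constrained) with `F 0 = 0`,
`F 1 = 0` (when `n ≥ 1`), `F i < i` for `1 ≤ i ≤ n`, and `F (i+1) ∈ Opt F (F i)` for
`1 ≤ i < n`. -/
def IsFSeq (n : ℕ) (F : ℕ → ℕ) : Prop :=
  F 0 = 0 ∧ (1 ≤ n → F 1 = 0) ∧ (∀ i, 1 ≤ i → i ≤ n → F i < i) ∧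
    ∀ i, 1 ≤ i → i < n → F (i + 1) ∈ Opt F (F i)

/-- `kappa F i` is the least `k ≥ 0` with `F^[k] i = 0`. -/
noncomputable def kappa (F : ℕ → ℕ) (i : ℕ) : ℕ := sInf {k | F^[k] i = 0}

/-- `idx F n k` is the least index `i ≤ n` with `kappa F i = k` (when one exists). -/
noncomputable def idx (F : ℕ → ℕ) (n k : ℕ) : ℕ := sInf {i | i ≤ n ∧ kappa F i = k}

namespace FSeqAux

lemma opt_shape (F : ℕ → ℕ) : ∀ j, ∀ x ∈ Opt F j, x = 0 ∨ ∃ t, x = F^[t] j + 1 := by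
  intro j
  induction j using Nat.strong_induction_on with
  | _ j ih =>
    intro x hx
    rw [Opt.eq_def] at hx
    split_ifs at hx with h0 h1 h2 h3
    · subst h0
      simp only [Finset.mem_insert, Finset.mem_singleton] at hx
      rcases hx with h | h
      · exact Or.inl h
      · exact Or.inr ⟨0, by simp [h]⟩
    · simp only [Finset.mem_insert, Finset.mem_sdiff, Finset.mem_singleton] at hx
      rcases hx with h | ⟨h, -⟩
      · exact Or.inr ⟨0, by simp [h]⟩
      · rcases h with h | h
        · exact Or.inl h
        · exact Or.inr ⟨1, by simp [h, h1]⟩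
    · simp only [Finset.mem_insert, Finset.mem_sdiff, Finset.mem_singleton] at hx
      rcases hx with h | ⟨h, -⟩
      · exact Or.inr ⟨0, by simp [h]⟩
      · rcases ih (F j) h2 x h with h' | ⟨t, ht⟩
        · exact Or.inl h'
        · exact Or.inr ⟨t + 1, by rw [Function.iterate_succ_apply]; exact ht⟩
    · simp only [Finset.mem_insert] at hx
      rcases hx with h | h
      · exact Or.inr ⟨0, by simp [h]⟩
      · rcases ih (F j) h2 x h with h' | ⟨t, ht⟩
        · exact Or.inl h'
        · exact Or.inr ⟨t + 1, by rw [Function.iterate_succ_apply]; exact ht⟩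
    · simp at hx

variable {n : ℕ} {F : ℕ → ℕ}

lemma iter_zero (hF : IsFSeq n F) : ∀ t, F^[t] 0 = 0 := by
  intro t
  induction t with
  | zero => rfl
  | succ t ih => rw [Function.iterate_succ_apply, hF.1, ih]

lemma chain_le (hF : IsFSeq n F) {i : ℕ} (hi : i ≤ n) :
    ∀ t, F^[t] i ≤ i ∧ F^[t] i ≤ n := by
  intro t
  induction t with
  | zero => exact ⟨le_rfl, hi⟩
  | succ t ih =>
    rw [Function.iterate_succ_apply']
    rcases Nat.eq_zero_or_pos (F^[t] i) with h0 | hpos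
    · rw [h0, hF.1]; exact ⟨Nat.zero_le _, Nat.zero_le _⟩
    · have h := hF.2.2.1 _ hpos ih.2
      exact ⟨le_trans h.le ih.1, le_trans h.le ih.2⟩

lemma exists_iter (hF : IsFSeq n F) : ∀ i, i ≤ n → ∃ k, F^[k] i = 0 := by
  intro i
  induction i using Nat.strong_induction_on with
  | _ i ih =>
    intro hi
    rcases Nat.eq_zero_or_pos i with h0 | hpos
    · exact ⟨0, h0⟩
    · have hlt := hF.2.2.1 i hpos hi
      obtain ⟨k, hk⟩ := ih (F i) hlt (le_trans hlt.le hi)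
      exact ⟨k + 1, by rw [Function.iterate_succ_apply]; exact hk⟩

lemma kappa_spec (hF : IsFSeq n F) {i : ℕ} (hi : i ≤ n) : F^[kappa F i] i = 0 :=
  Nat.sInf_mem (exists_iter hF i hi)

lemma kappa_min {i k : ℕ} (hk : F^[k] i = 0) : kappa F i ≤ k := Nat.sInf_le hk

lemma kappa_zero (F : ℕ → ℕ) : kappa F 0 = 0 :=
  Nat.sInf_eq_zero.mpr (Or.inl rfl)

lemma kappa_pos (hF : IsFSeq n F) {i : ℕ} (hi : i ≤ n) (h0 : i ≠ 0) : 1 ≤ kappa F i := by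
  rcases Nat.eq_zero_or_pos (kappa F i) with h | h
  · exfalso; have := kappa_spec hF hi; rw [h] at this; exact h0 this
  · exact h

lemma kappa_succ (hF : IsFSeq n F) {i : ℕ} (h1 : 1 ≤ i) (hi : i ≤ n) :
    kappa F i = kappa F (F i) + 1 := by
  have hFi : F i ≤ n := le_trans (hF.2.2.1 i h1 hi).le hi
  have hle : kappa F i ≤ kappa F (F i) + 1 :=
    kappa_min (by rw [Function.iterate_succ_apply]; exact kappa_spec hF hFi)
  have hp : 1 ≤ kappa F i := kappa_pos hF hi (by omega)
  have h2 : F^[kappa F i - 1] (F i) = 0 := by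
    have h := kappa_spec hF hi
    rwa [show kappa F i = (kappa F i - 1) + 1 by omega, Function.iterate_succ_apply] at h
  have := kappa_min h2
  omega

lemma kappa_iter (hF : IsFSeq n F) {i : ℕ} (hi : i ≤ n) :
    ∀ t, t ≤ kappa F i → kappa F (F^[t] i) = kappa F i - t := by
  intro t
  induction t with
  | zero => intro _; simp
  | succ t ih =>
    intro ht
    have ht' : t < kappa F i := by omega
    have hkt := ih ht'.le
    have hmn : F^[t] i ≤ n := (chain_le hF hi t).2
    have hne : F^[t] i ≠ 0 := by
      intro h
      rw [h, kappa_zero] at hkt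
      omega
    have := kappa_succ hF (Nat.one_le_iff_ne_zero.mpr hne) hmn
    rw [Function.iterate_succ_apply']
    omega

lemma kappa_le_self (hF : IsFSeq n F) : ∀ i, i ≤ n → kappa F i ≤ i := by
  intro i
  induction i using Nat.strong_induction_on with
  | _ i ih =>
    intro hi
    rcases Nat.eq_zero_or_pos i with h0 | hpos
    · rw [h0, kappa_zero]
    · have hlt := hF.2.2.1 i hpos hi
      have := ih (F i) hlt (le_trans hlt.le hi)
      rw [kappa_succ hF hpos hi]
      omega

lemma idx_spec (hex : ∃ i, i ≤ n ∧ kappa F i = k) :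
    idx F n k ≤ n ∧ kappa F (idx F n k) = k := Nat.sInf_mem hex

lemma idx_le {i k : ℕ} (hi : i ≤ n) (hk : kappa F i = k) : idx F n k ≤ i :=
  Nat.sInf_le ⟨hi, hk⟩

lemma idx_zero (F : ℕ → ℕ) (n : ℕ) : idx F n 0 = 0 :=
  Nat.sInf_eq_zero.mpr (Or.inl ⟨Nat.zero_le n, kappa_zero F⟩)

lemma idx_pos {k : ℕ} (hex : ∃ i, i ≤ n ∧ kappa F i = k) (hk : 1 ≤ k) :
    1 ≤ idx F n k := by
  rcases Nat.eq_zero_or_pos (idx F n k) with h | h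
  · exfalso
    have := (idx_spec hex).2
    rw [h, kappa_zero] at this
    omega
  · exact h

lemma ex_down (hF : IsFSeq n F) {k : ℕ} (hex : ∃ i, i ≤ n ∧ kappa F i = k) :
    ∀ w, w ≤ k → ∃ i, i ≤ n ∧ kappa F i = w := by
  intro w hw
  obtain ⟨i, hi, hki⟩ := hex
  refine ⟨F^[k - w] i, (chain_le hF hi _).2, ?_⟩
  have := kappa_iter hF hi (k - w) (by omega)
  rw [hki] at this
  omega

lemma idx_mono (hF : IsFSeq n F) {w v : ℕ} (hwv : w ≤ v)
    (hexv : ∃ i, i ≤ n ∧ kappa F i = v) : idx F n w ≤ idx F n v := by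
  obtain ⟨ha, hka⟩ := idx_spec hexv
  have h1 : kappa F (F^[v - w] (idx F n v)) = w := by
    have := kappa_iter hF ha (v - w) (by omega)
    rw [hka] at this
    omega
  exact le_trans (idx_le (chain_le hF ha _).2 h1) (chain_le hF ha (v - w)).1

lemma kappa_one (hF : IsFSeq n F) (hn : 1 ≤ n) : kappa F 1 = 1 := by
  rw [kappa_succ hF le_rfl hn, hF.2.1 hn, kappa_zero]

/-- normalized move lemma: `F (i+1)` is `0` or `F^[u] i + 1` with `1 ≤ u ≤ κ i`. -/
lemma move (hF : IsFSeq n F) {i : ℕ} (h1 : 1 ≤ i) (hi : i < n) :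
    F (i + 1) = 0 ∨ ∃ u, 1 ≤ u ∧ u ≤ kappa F i ∧ F (i + 1) = F^[u] i + 1 := by
  have hin : i ≤ n := hi.le
  have hki : 1 ≤ kappa F i := kappa_pos hF hin (by omega)
  rcases opt_shape F (F i) _ (hF.2.2.2 i h1 hi) with h0 | ⟨t, ht⟩
  · exact Or.inl h0
  · rw [← Function.iterate_succ_apply] at ht
    rcases le_or_gt (t + 1) (kappa F i) with hu | hu
    · exact Or.inr ⟨t + 1, by omega, hu, ht⟩
    · have hz : F^[t + 1] i = 0 := by
        have : F^[t + 1] i = F^[t + 1 - kappa F i] (F^[kappa F i] i) := by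
          rw [← Function.iterate_add_apply]
          congr 1
          omega
        rw [this, kappa_spec hF hin, iter_zero hF]
      refine Or.inr ⟨kappa F i, hki, le_rfl, ?_⟩
      rw [kappa_spec hF hin, ht, hz]

lemma kappa_step (hF : IsFSeq n F) :
    ∀ i, 1 ≤ i → i < n → kappa F (i + 1) ≤ kappa F i + 1 ∧
      (kappa F (i + 1) = kappa F i + 1 → F (i + 1) = F i + 1) := by
  intro i
  induction i using Nat.strong_induction_on with
  | _ i ih =>
    intro h1 hi
    have hin : i ≤ n := hi.le
    have hi1n : i + 1 ≤ n := hi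
    have hki : 1 ≤ kappa F i := kappa_pos hF hin (by omega)
    have hsucc : kappa F (i + 1) = kappa F (F (i + 1)) + 1 :=
      kappa_succ hF (by omega) hi1n
    rcases move hF h1 hi with h0 | ⟨u, hu1, hu2, hxu⟩
    · rw [hsucc, h0, kappa_zero]
      omega
    · set m0 := F^[u] i with hm0
      have hm0n : m0 ≤ n := (chain_le hF hin u).2
      have hm0k : kappa F m0 = kappa F i - u := kappa_iter hF hin u hu2
      have hm0Fi : m0 ≤ F i := by
        have : F^[u] i = F^[u - 1] (F i) := by
          rw [← Function.iterate_succ_apply]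
          congr 1
          omega
        rw [hm0, this]
        exact (chain_le hF (le_trans (hF.2.2.1 i h1 hin).le hin) (u - 1)).1
      have hbound : kappa F (m0 + 1) ≤ kappa F m0 + 1 := by
        rcases Nat.eq_zero_or_pos m0 with h | h
        · rw [h, kappa_one hF (by omega), kappa_zero]
        · have hm0i : m0 < i := lt_of_le_of_lt hm0Fi (hF.2.2.1 i h1 hin)
          exact (ih m0 hm0i h (by omega)).1
      constructor
      · rw [hsucc, hxu]
        omega
      · intro he
        have hu : u = 1 := by
          rw [hsucc, hxu] at he
          omega
        rw [hxu, hm0, hu, Function.iterate_one]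

/-- The frontier: maximum of `kappa` over `0,…,ℓ`. -/
noncomputable def Wf (F : ℕ → ℕ) (ℓ : ℕ) : ℕ := (Finset.range (ℓ + 1)).sup (kappa F)

lemma le_Wf {j ℓ : ℕ} (h : j ≤ ℓ) : kappa F j ≤ Wf F ℓ :=
  Finset.le_sup (Finset.mem_range.mpr (by omega))

lemma Wf_attained (F : ℕ → ℕ) (ℓ : ℕ) : ∃ j, j ≤ ℓ ∧ kappa F j = Wf F ℓ := by
  obtain ⟨j, hj, he⟩ := Finset.exists_mem_eq_sup (Finset.range (ℓ + 1))
    (by simp) (kappa F)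
  exact ⟨j, by simpa using Nat.lt_succ_iff.mp (Finset.mem_range.mp hj), he.symm⟩

lemma Wf_mono {ℓ ℓ' : ℕ} (h : ℓ ≤ ℓ') : Wf F ℓ ≤ Wf F ℓ' :=
  Finset.sup_mono (Finset.range_subset_range.mpr (by omega))

lemma Wf_succ (F : ℕ → ℕ) (ℓ : ℕ) : Wf F (ℓ + 1) = max (Wf F ℓ) (kappa F (ℓ + 1)) := by
  rw [Wf, Finset.range_add_one, Finset.sup_insert, max_comm]
  rfl

lemma hex_Wf (hF : IsFSeq n F) {ℓ : ℕ} (hℓ : ℓ ≤ n) :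
    ∃ i, i ≤ n ∧ kappa F i = Wf F ℓ := by
  obtain ⟨j, hj, he⟩ := Wf_attained F ℓ
  exact ⟨j, le_trans hj hℓ, he⟩

/-- Master invariant. -/
lemma master (hF : IsFSeq n F) :
    ∀ ℓ, 1 ≤ ℓ → ℓ ≤ n →
      (∀ t, 1 ≤ t → F^[t] ℓ < idx F n (Wf F ℓ)) ∧
      (idx F n (Wf F ℓ) + F ℓ ≤ idx F n (Wf F ℓ - 1) + ℓ) := by
  intro ℓ
  induction ℓ using Nat.strong_induction_on with
  | _ ℓ ih =>
    intro h1 hℓn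
    rcases Nat.lt_or_ge ℓ 2 with hℓ1 | hℓ2
    · -- base case ℓ = 1
      have hℓ : ℓ = 1 := by omega
      subst hℓ
      have hn : 1 ≤ n := hℓn
      have hF1 : F 1 = 0 := hF.2.1 hn
      have hW1 : Wf F 1 = 1 := by
        rw [Wf_succ, show Wf F 0 = 0 by
          rw [Wf]; simp [Finset.range_one, kappa_zero], kappa_one hF hn]
        simp
      have hidx1 : idx F n 1 = 1 := by
        have hle := idx_le hn (kappa_one hF hn)
        have hpos := idx_pos ⟨1, hn, kappa_one hF hn⟩ le_rfl
        omega
      constructor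
      · intro t ht
        have : F^[t] 1 = 0 := by
          rw [show t = (t - 1) + 1 by omega, Function.iterate_succ_apply, hF1,
            iter_zero hF]
        rw [this, hW1, hidx1]
        omega
      · rw [hW1, hidx1, hF1, idx_zero]
    · -- step: ℓ = m + 1 with m ≥ 1
      obtain ⟨m, rfl⟩ : ∃ m, ℓ = m + 1 := ⟨ℓ - 1, by omega⟩
      have hm1 : 1 ≤ m := by omega
      have hmn : m < n := by omega
      have hmln : m ≤ n := by omega
      obtain ⟨Am, Bm⟩ := ih m (by omega) hm1 hmln
      have hkm : 1 ≤ kappa F m := kappa_pos hF hmln (by omega)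
      have hWm : 1 ≤ Wf F m := le_trans hkm (le_Wf le_rfl)
      have hexWm : ∃ i, i ≤ n ∧ kappa F i = Wf F m := hex_Wf hF hmln
      have hsucc : kappa F (m + 1) = kappa F (F (m + 1)) + 1 :=
        kappa_succ hF (by omega) hℓn
      rcases move hF hm1 hmn with hx0 | ⟨u, hu1, hu2, hxu⟩
      · -- x = 0
        have hk1 : kappa F (m + 1) = 1 := by rw [hsucc, hx0, kappa_zero]
        have hW' : Wf F (m + 1) = Wf F m := by
          rw [Wf_succ, hk1]
          omega
        have hiter0 : ∀ t, 1 ≤ t → F^[t] (m + 1) = 0 := by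
          intro t ht
          rw [show t = (t - 1) + 1 by omega, Function.iterate_succ_apply, hx0,
            iter_zero hF]
        have hidxpos : 1 ≤ idx F n (Wf F (m + 1)) := by
          rw [hW']
          exact idx_pos hexWm hWm
        constructor
        · intro t ht
          rw [hiter0 t ht]
          omega
        · obtain ⟨j, hj, hje⟩ := Wf_attained F m
          have : idx F n (Wf F m) ≤ j := idx_le (le_trans hj hmln) hje
          rw [hW', hx0]
          omega
      · -- x = m0 + 1
        set m0 := F^[u] m with hm0
        have hm0n : m0 ≤ n := (chain_le hF hmln u).2
        have hm0Fm : m0 ≤ F m := by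
          have h' : F^[u] m = F^[u - 1] (F m) := by
            rw [← Function.iterate_succ_apply]
            congr 1
            omega
          rw [hm0, h']
          exact (chain_le hF (le_trans (hF.2.2.1 m hm1 hmln).le hmln) (u - 1)).1
        have hFm : F m < m := hF.2.2.1 m hm1 hmln
        have hxm : F (m + 1) ≤ m := by rw [hxu]; omega
        have hm0lt : m0 < idx F n (Wf F m) := Am u hu1
        rcases le_or_gt (kappa F (m + 1)) (Wf F m) with hW | hW
        · -- frontier unchanged
          have hW' : Wf F (m + 1) = Wf F m := by
            rw [Wf_succ]
            omega
          constructor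
          · intro t ht
            rcases eq_or_lt_of_le ht with h1t | h2t
            · -- t = 1
              rw [← h1t, Function.iterate_one, hW', hxu]
              rcases eq_or_lt_of_le (show m0 + 1 ≤ idx F n (Wf F m) by omega)
                with he | hlt
              · exfalso
                have hkx : kappa F (m0 + 1) = Wf F m := by
                  rw [he]; exact (idx_spec hexWm).2
                rw [hsucc, hxu, hkx] at hW
                omega
              · exact hlt
            · -- t ≥ 2
              have hx1 : 1 ≤ F (m + 1) := by rw [hxu]; omega
              have hiter : F^[t] (m + 1) = F^[t - 1] (F (m + 1)) := by
                rw [← Function.iterate_succ_apply]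
                congr 1
                omega
              have hxn : F (m + 1) ≤ n := by omega
              have := (ih (F (m + 1)) (by omega) hx1 hxn).1 (t - 1) (by omega)
              rw [hiter]
              calc F^[t - 1] (F (m + 1)) < idx F n (Wf F (F (m + 1))) := this
                _ ≤ idx F n (Wf F (m + 1)) := by
                    rw [hW']
                    exact idx_mono hF (Wf_mono (by omega)) hexWm
          · rw [hW', hxu]
            omega
        · -- new record
          have hstep := (kappa_step hF m hm1 hmn).1
          have hWmk : kappa F m ≤ Wf F m := le_Wf le_rfl
          have hk' : kappa F (m + 1) = Wf F m + 1 := by omega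
          have hW' : Wf F (m + 1) = Wf F m + 1 := by
            rw [Wf_succ]
            omega
          have hexW' : ∃ i, i ≤ n ∧ kappa F i = Wf F (m + 1) :=
            ⟨m + 1, hℓn, by omega⟩
          have hidx : idx F n (Wf F (m + 1)) = m + 1 := by
            have hle := idx_le hℓn (show kappa F (m + 1) = Wf F (m + 1) by omega)
            rcases eq_or_lt_of_le hle with he | hlt
            · exact he
            · exfalso
              have h2 := (idx_spec hexW').2
              have h3 : kappa F (idx F n (Wf F (m + 1))) ≤ Wf F m :=
                le_Wf (show idx F n (Wf F (m + 1)) ≤ m by omega)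
              omega
          constructor
          · intro t ht
            rcases eq_or_lt_of_le ht with h1t | h2t
            · rw [← h1t, Function.iterate_one, hidx]
              omega
            · have hx1 : 1 ≤ F (m + 1) := by rw [hxu]; omega
              have hiter : F^[t] (m + 1) = F^[t - 1] (F (m + 1)) := by
                rw [← Function.iterate_succ_apply]
                congr 1
                omega
              have hxn : F (m + 1) ≤ n := by omega
              have := (chain_le hF hxn (t - 1)).1
              rw [hiter, hidx]
              omega
          · rw [hidx, hxu, show Wf F (m + 1) - 1 = Wf F m by omega]
            omega

lemma before_idx (hF : IsFSeq n F) {k : ℕ} (hk : 1 ≤ k)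
    (hex : ∃ i, i ≤ n ∧ kappa F i = k) :
    ∀ j, j < idx F n k → kappa F j < k := by
  have hidxn : idx F n k ≤ n := (idx_spec hex).1
  intro j
  induction j using Nat.strong_induction_on with
  | _ j ih =>
    intro hj
    have hjn : j ≤ n := by omega
    have hne : kappa F j ≠ k := by
      intro h
      have := idx_le hjn h
      omega
    rcases Nat.eq_zero_or_pos j with h0 | hpos
    · rw [h0, kappa_zero]; omega
    · obtain ⟨j', rfl⟩ : ∃ j', j = j' + 1 := ⟨j - 1, by omega⟩
      rcases Nat.eq_zero_or_pos j' with h0' | hpos'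
      · subst h0'
        have hk1 : kappa F (0 + 1) = 1 := kappa_one hF (by omega)
        omega
      · have hstep := (kappa_step hF j' hpos' (by omega)).1
        have := ih j' (by omega) (by omega)
        omega

lemma idx_two_le (hF : IsFSeq n F) {k : ℕ} (hk : 2 ≤ k)
    (hex : ∃ i, i ≤ n ∧ kappa F i = k) : 2 ≤ idx F n k := by
  have h1 := idx_pos hex (by omega)
  have h2 := (idx_spec hex).2
  have hn1 : 1 ≤ n := le_trans h1 (idx_spec hex).1
  rcases eq_or_lt_of_le h1 with he | h
  · exfalso
    rw [← he] at h2
    rw [kappa_one hF hn1] at h2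
    omega
  · omega

lemma pred_idx (hF : IsFSeq n F) {k : ℕ} (hk : 2 ≤ k)
    (hex : ∃ i, i ≤ n ∧ kappa F i = k) :
    kappa F (idx F n k - 1) = k - 1 ∧ Wf F (idx F n k - 1) = k - 1 := by
  set a := idx F n k with ha
  have ha2 : 2 ≤ a := idx_two_le hF hk hex
  have han : a ≤ n := (idx_spec hex).1
  have hka : kappa F a = k := (idx_spec hex).2
  have hlt : kappa F (a - 1) < k := before_idx hF (by omega) hex (a - 1) (by omega)
  have hstep : kappa F a ≤ kappa F (a - 1) + 1 := by
    have := (kappa_step hF (a - 1) (by omega) (by omega)).1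
    rwa [show a - 1 + 1 = a by omega] at this
  have h1 : kappa F (a - 1) = k - 1 := by omega
  refine ⟨h1, le_antisymm ?_ ?_⟩
  · apply Finset.sup_le
    intro j hj
    have hj' : j < a := by
      have := Finset.mem_range.mp hj
      omega
    have := before_idx hF (by omega) hex j hj'
    omega
  · rw [← h1]
    exact le_Wf le_rfl

lemma claim2 (hF : IsFSeq n F) {k : ℕ} (hk : 1 ≤ k)
    (hex : ∃ i, i ≤ n ∧ kappa F i = k) :
    F (idx F n k) = idx F n (k - 1) := by
  rcases eq_or_lt_of_le hk with he | hk2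
  · -- k = 1
    have hn1 : 1 ≤ n := by
      obtain ⟨i, hi, hki⟩ := hex
      have : i ≠ 0 := by
        intro h; rw [h, kappa_zero] at hki; omega
      omega
    have hk1 : kappa F 1 = 1 := kappa_one hF hn1
    have hidx1 : idx F n 1 = 1 := by
      have hle := idx_le hn1 hk1
      have hpos := idx_pos ⟨1, hn1, hk1⟩ le_rfl
      omega
    rw [← he, hidx1, hF.2.1 hn1, idx_zero]
  · -- k ≥ 2
    have hk2' : 2 ≤ k := hk2
    set a := idx F n k with ha
    have ha2 : 2 ≤ a := idx_two_le hF hk2' hex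
    have han : a ≤ n := (idx_spec hex).1
    have hka : kappa F a = k := (idx_spec hex).2
    have hpred := pred_idx hF hk2' hex
    have hrev : idx F n (k - 1) ≤ F a := by
      apply idx_le
      · exact le_trans (hF.2.2.1 a (by omega) han).le han
      · have := kappa_succ hF (show 1 ≤ a by omega) han
        omega
    rcases move hF (show 1 ≤ a - 1 by omega) (show a - 1 < n by omega) with h0 | h
    · exfalso
      rw [show a - 1 + 1 = a by omega] at h0
      have := kappa_succ hF (show 1 ≤ a by omega) han
      rw [h0, kappa_zero] at this
      omega
    · obtain ⟨u, hu1, hu2, hxu⟩ := h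
      rw [show a - 1 + 1 = a by omega] at hxu
      have hA := (master hF (a - 1) (by omega) (by omega)).1 u hu1
      rw [hpred.2] at hA
      omega

end FSeqAux

/-- Let `F` be an F-sequence of length `n`. For `0 ≤ i ≤ n` let `κ i` be the least
`k ≥ 0` with `F^[k] i = 0`, and let `i_k` be the least index `i ≤ n` with `κ i = k`,
when one exists. Then for every `k ≥ 1` such that `i_k` exists, `i_{k−1}` exists and
`F (i_k) = i_{k−1}`; consequently, whenever `i_{k+1}` also exists,
`i_{k+1} − i_k ≥ i_k − i_{k−1}`. -/
theorem increments_grow (n : ℕ) (F : ℕ → ℕ) (hF : IsFSeq n F)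
    (k : ℕ) (hk : 1 ≤ k) (hex : ∃ i ≤ n, kappa F i = k) :
    (∃ i ≤ n, kappa F i = k - 1) ∧
    F (idx F n k) = idx F n (k - 1) ∧
    ((∃ i ≤ n, kappa F i = k + 1) →
      (idx F n k : ℤ) - idx F n (k - 1) ≤ (idx F n (k + 1) : ℤ) - idx F n k) := by
  obtain ⟨hexd, hc2⟩ : (∃ i ≤ n, kappa F i = k - 1) ∧ F (idx F n k) = idx F n (k - 1) :=
    ⟨FSeqAux.ex_down hF hex (k - 1) (by omega), FSeqAux.claim2 hF hk hex⟩
  refine ⟨hexd, hc2, ?_⟩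
  intro hex1
  have hcn : idx F n (k + 1) ≤ n := (FSeqAux.idx_spec hex1).1
  have hkc : kappa F (idx F n (k + 1)) = k + 1 := (FSeqAux.idx_spec hex1).2
  have hc2le : 2 ≤ idx F n (k + 1) := FSeqAux.idx_two_le hF (by omega) hex1
  have hpred := FSeqAux.pred_idx hF (show 2 ≤ k + 1 by omega) hex1
  rw [show k + 1 - 1 = k by omega] at hpred
  have hFc : F (idx F n (k + 1)) = idx F n k := by
    have := FSeqAux.claim2 hF (show 1 ≤ k + 1 by omega) hex1
    rwa [show k + 1 - 1 = k by omega] at this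
  have hstepeq : F (idx F n (k + 1)) = F (idx F n (k + 1) - 1) + 1 := by
    have hs := (FSeqAux.kappa_step hF (idx F n (k + 1) - 1) (by omega) (by omega)).2
    rw [show idx F n (k + 1) - 1 + 1 = idx F n (k + 1) by omega] at hs
    apply hs
    have h2 := hpred.1
    omega
  have hB := (FSeqAux.master hF (idx F n (k + 1) - 1) (by omega) (by omega)).2
  rw [hpred.2] at hB
  have h1k : 1 ≤ idx F n k := FSeqAux.idx_pos hex hk
  have hfc1 : F (idx F n (k + 1) - 1) + 1 = idx F n k := by omega
  push_cast
  omega
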